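/- Suppose a Markov kernel κ from ℝ to ℝ satisfies (μ_x.bind κ).bind G = μ_x.bind G for every x ∈ ℝ (the channel is manipulated by κ without changing conditional output laws). Define the joint observation law under attack κ as Λ_κ := (1/2)·Σ_{s ∈ {−1,+1}} N(h3·s, 1) ⊗ (((N(h1·s,1)).bind κ).bind G) on ℝ × ℝ, and let Λ_δ be the same construction with κ replaced by the Dirac kernel u ↦ δ_u (honest relaying). Then Λ_κ = Λ_δ; consequently, for every n ≥ 1 the n-fold product measures satisfy Λ_κ^{⊗n} = Λ_δ^{⊗n}, and therefore every measurable statistic D : (ℝ × ℝ)^n → ℝ has the same distribution under the i.i.d. attack κ as under honest relaying, so no decision statistic based on the destination's observations can distinguish the attack from honest relaying. -/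

import Mathlib

open MeasureTheory ProbabilityTheory
open scoped ENNReal

/-- Bayes posterior weight of source symbol `+1` given direct observation `x`. -/
noncomputable def mixWeight (h3 x : ℝ) : ℝ :=
  Real.exp (-(x - h3) ^ 2 / 2) /
    (Real.exp (-(x - h3) ^ 2 / 2) + Real.exp (-(x + h3) ^ 2 / 2))

/-- Conditional law of the relay's observation given direct observation `x`:
`μ_x = w(x) • N(h1,1) + (1 - w(x)) • N(-h1,1)`. -/
noncomputable def muX (h1 h3 x : ℝ) : Measure ℝ :=
  ENNReal.ofReal (mixWeight h3 x) • gaussianReal h1 1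
    + ENNReal.ofReal (1 - mixWeight h3 x) • gaussianReal (-h1) 1

/-- Relay-to-destination Gaussian channel `G(v) = N(h2 ⬝ v, 1)`. -/
noncomputable def Gchan (h2 : ℝ) : ℝ → Measure ℝ := fun v => gaussianReal (h2 * v) 1

/-- Joint law of the destination's two observations when the relay applies the
(attack) channel `κ : ℝ → Measure ℝ`:
`Λ_κ = (1/2) Σ_{s ∈ {-1,+1}} N(h3 s,1) ⊗ (((N(h1 s,1)).bind κ).bind G)`. -/
noncomputable def jointLaw (h1 h2 h3 : ℝ) (κ : ℝ → Measure ℝ) : Measure (ℝ × ℝ) :=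
  (1 / 2 : ℝ≥0∞) •
      ((gaussianReal (h3 * 1) 1).prod (((gaussianReal (h1 * 1) 1).bind κ).bind (Gchan h2)))
    + (1 / 2 : ℝ≥0∞) •
      ((gaussianReal (h3 * (-1)) 1).prod
        (((gaussianReal (h1 * (-1)) 1).bind κ).bind (Gchan h2)))

lemma measurable_Gchan (h2 : ℝ) : Measurable (Gchan h2) := by
  refine Measure.measurable_of_measurable_coe _ (fun s hs => ?_)
  simp only [Gchan, gaussianReal_apply _ one_ne_zero s]
  have hm : Measurable (fun p : ℝ × ℝ => gaussianPDF (h2 * p.1) 1 p.2) := by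
    unfold gaussianPDF gaussianPDFReal
    apply Measurable.ennreal_ofReal
    fun_prop
  exact hm.lintegral_prod_right'

lemma bind_add'' (μ ν : Measure ℝ) (f : ℝ → Measure ℝ) (hf : Measurable f) :
    (μ + ν).bind f = μ.bind f + ν.bind f := by
  ext s hs
  rw [Measure.bind_apply hs hf.aemeasurable, lintegral_add_measure, Measure.add_apply,
    Measure.bind_apply hs hf.aemeasurable, Measure.bind_apply hs hf.aemeasurable]

lemma bind_smul'' (c : ℝ≥0∞) (μ : Measure ℝ) (f : ℝ → Measure ℝ) (hf : Measurable f) :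
    (c • μ).bind f = c • μ.bind f := by
  ext s hs
  rw [Measure.bind_apply hs hf.aemeasurable, lintegral_smul_measure, Measure.smul_apply,
    Measure.bind_apply hs hf.aemeasurable, smul_eq_mul]

lemma isProbabilityMeasure_bind' {μ : Measure ℝ} [IsProbabilityMeasure μ] {f : ℝ → Measure ℝ}
    (hf : Measurable f) (h : ∀ x, IsProbabilityMeasure (f x)) :
    IsProbabilityMeasure (μ.bind f) := by
  constructor
  rw [Measure.bind_apply MeasurableSet.univ hf.aemeasurable]
  rw [lintegral_congr (fun a => (h a).measure_univ), lintegral_one, measure_univ]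

lemma mixWeight_nonneg (h3 x : ℝ) : 0 ≤ mixWeight h3 x := by
  unfold mixWeight; positivity

lemma mixWeight_le_one (h3 x : ℝ) : mixWeight h3 x ≤ 1 := by
  unfold mixWeight
  rw [div_le_one (by positivity)]
  nlinarith [Real.exp_pos (-(x + h3) ^ 2 / 2)]

lemma muX_bind (h1 h3 x : ℝ) {f : ℝ → Measure ℝ} (hf : Measurable f) :
    (muX h1 h3 x).bind f
      = ENNReal.ofReal (mixWeight h3 x) • ((gaussianReal h1 1).bind f)
        + ENNReal.ofReal (1 - mixWeight h3 x) • ((gaussianReal (-h1) 1).bind f) := by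
  unfold muX
  rw [bind_add'' _ _ _ hf, bind_smul'' _ _ _ hf, bind_smul'' _ _ _ hf]

lemma toReal_comb {w : ℝ} (hw0 : 0 ≤ w) (hw1 : w ≤ 1) (μ ν : Measure ℝ)
    [IsFiniteMeasure μ] [IsFiniteMeasure ν] (s : Set ℝ) :
    ((ENNReal.ofReal w • μ + ENNReal.ofReal (1 - w) • ν) s).toReal
      = w * (μ s).toReal + (1 - w) * (ν s).toReal := by
  rw [Measure.add_apply, Measure.smul_apply, Measure.smul_apply, smul_eq_mul, smul_eq_mul,
    ENNReal.toReal_add (ENNReal.mul_ne_top ENNReal.ofReal_ne_top (measure_ne_top _ _))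
      (ENNReal.mul_ne_top ENNReal.ofReal_ne_top (measure_ne_top _ _)),
    ENNReal.toReal_mul, ENNReal.toReal_mul, ENNReal.toReal_ofReal hw0,
    ENNReal.toReal_ofReal (by linarith)]

/-- **Undetectability of channel-law-preserving attacks (necessity direction).**
If a Markov kernel `κ` leaves every conditional output law unchanged, then the joint
observation law under attack equals the one under honest (Dirac) relaying; hence all
finite product laws coincide and every measurable decision statistic has the same
distribution under the attack as under honest relaying. -/
theorem undetectable_of_manipulation (h1 h2 h3 : ℝ)
    (κ : Kernel ℝ ℝ) [IsMarkovKernel κ]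
    (hκ : ∀ x : ℝ,
      ((muX h1 h3 x).bind (κ ·)).bind (Gchan h2) = (muX h1 h3 x).bind (Gchan h2)) :
    jointLaw h1 h2 h3 (κ ·) = jointLaw h1 h2 h3 (fun u => Measure.dirac u) ∧
    (∀ n : ℕ, 1 ≤ n →
      Measure.pi (fun _ : Fin n => jointLaw h1 h2 h3 (κ ·))
        = Measure.pi (fun _ : Fin n => jointLaw h1 h2 h3 (fun u => Measure.dirac u))) ∧
    (∀ n : ℕ, 1 ≤ n → ∀ D : (Fin n → ℝ × ℝ) → ℝ, Measurable D →
      (Measure.pi (fun _ : Fin n => jointLaw h1 h2 h3 (κ ·))).map D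
        = (Measure.pi (fun _ : Fin n => jointLaw h1 h2 h3 (fun u => Measure.dirac u))).map D) := by
  have hG := measurable_Gchan h2
  have hks : Measurable (κ ·) := κ.measurable
  set A : Measure ℝ := ((gaussianReal h1 1).bind (κ ·)).bind (Gchan h2) with hAdef
  set B : Measure ℝ := ((gaussianReal (-h1) 1).bind (κ ·)).bind (Gchan h2) with hBdef
  set A0 : Measure ℝ := (gaussianReal h1 1).bind (Gchan h2) with hA0def
  set B0 : Measure ℝ := (gaussianReal (-h1) 1).bind (Gchan h2) with hB0def
  haveI : IsProbabilityMeasure ((gaussianReal h1 1).bind (κ ·)) :=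
    isProbabilityMeasure_bind' hks (fun x => inferInstance)
  haveI : IsProbabilityMeasure ((gaussianReal (-h1) 1).bind (κ ·)) :=
    isProbabilityMeasure_bind' hks (fun x => inferInstance)
  haveI hPA : IsProbabilityMeasure A :=
    isProbabilityMeasure_bind' hG (fun x => by unfold Gchan; infer_instance)
  haveI hPB : IsProbabilityMeasure B :=
    isProbabilityMeasure_bind' hG (fun x => by unfold Gchan; infer_instance)
  haveI hPA0 : IsProbabilityMeasure A0 :=
    isProbabilityMeasure_bind' hG (fun x => by unfold Gchan; infer_instance)
  haveI hPB0 : IsProbabilityMeasure B0 :=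
    isProbabilityMeasure_bind' hG (fun x => by unfold Gchan; infer_instance)
  have key : ∀ x : ℝ,
      ENNReal.ofReal (mixWeight h3 x) • A + ENNReal.ofReal (1 - mixWeight h3 x) • B
        = ENNReal.ofReal (mixWeight h3 x) • A0 + ENNReal.ofReal (1 - mixWeight h3 x) • B0 := by
    intro x
    have e := hκ x
    rw [muX_bind h1 h3 x hks, bind_add'' _ _ _ hG, bind_smul'' _ _ _ hG, bind_smul'' _ _ _ hG,
      muX_bind h1 h3 x hG] at e
    exact e
  have keyR : ∀ x : ℝ, ∀ s : Set ℝ,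
      mixWeight h3 x * (A s).toReal + (1 - mixWeight h3 x) * (B s).toReal
        = mixWeight h3 x * (A0 s).toReal + (1 - mixWeight h3 x) * (B0 s).toReal := by
    intro x s
    have := congrArg (fun m : Measure ℝ => (m s).toReal) (key x)
    simpa only [toReal_comb (mixWeight_nonneg h3 x) (mixWeight_le_one h3 x)] using this
  -- main joint-law equality
  have hjoint : jointLaw h1 h2 h3 (κ ·) = jointLaw h1 h2 h3 (fun u => Measure.dirac u) := by
    have hd1 : (gaussianReal (h1 * 1) 1).bind (fun u => Measure.dirac u) = gaussianReal (h1 * 1) 1 :=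
      Measure.bind_dirac
    have hd2 : (gaussianReal (h1 * (-1)) 1).bind (fun u => Measure.dirac u)
        = gaussianReal (h1 * (-1)) 1 := Measure.bind_dirac
    unfold jointLaw
    rw [hd1, hd2]
    simp only [mul_one, mul_neg_one]
    rw [← hAdef, ← hBdef, ← hA0def, ← hB0def]
    by_cases h3z : h3 = 0
    · -- equal weights; only the sum is identified, but the two Gaussians coincide
      have hw : ∀ x : ℝ, mixWeight 0 x = 1 / 2 := by
        intro x
        unfold mixWeight
        rw [sub_zero, add_zero, div_eq_iff (by positivity)]
        ring
      have hsum : ∀ s : Set ℝ, (A s).toReal + (B s).toReal = (A0 s).toReal + (B0 s).toReal := by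
        intro s
        have := keyR 0 s
        rw [h3z, hw 0] at this
        linarith
      have hsum' : A + B = A0 + B0 := by
        ext s hs
        have h' := hsum s
        have : ((A + B) s).toReal = ((A0 + B0) s).toReal := by
          rw [Measure.add_apply, Measure.add_apply,
            ENNReal.toReal_add (measure_ne_top _ _) (measure_ne_top _ _),
            ENNReal.toReal_add (measure_ne_top _ _) (measure_ne_top _ _)]
          exact h'
        exact (ENNReal.toReal_eq_toReal_iff' (by finiteness) (by finiteness)).mp this
      rw [h3z]
      simp only [neg_zero]
      rw [← smul_add, ← smul_add, ← Measure.prod_add, ← Measure.prod_add, hsum']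
    · -- distinct weights at x = h3 and x = -h3 pin down both components
      have hwa : mixWeight h3 h3 = 1 / (1 + Real.exp (-(2 * h3) ^ 2 / 2)) := by
        unfold mixWeight
        rw [sub_self]
        norm_num
        ring_nf
      have hwb : mixWeight h3 (-h3)
          = Real.exp (-(2 * h3) ^ 2 / 2) / (Real.exp (-(2 * h3) ^ 2 / 2) + 1) := by
        unfold mixWeight
        rw [neg_add_cancel]
        norm_num
        ring_nf
      have hexp : Real.exp (-(2 * h3) ^ 2 / 2) < 1 := by
        rw [Real.exp_lt_one_iff]
        have : (0:ℝ) < (2 * h3) ^ 2 := by positivity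
        linarith
      have hexp0 : 0 < Real.exp (-(2 * h3) ^ 2 / 2) := Real.exp_pos _
      have hwab : mixWeight h3 h3 ≠ mixWeight h3 (-h3) := by
        rw [hwa, hwb]
        intro hcon
        rw [div_eq_div_iff (by positivity) (by positivity)] at hcon
        nlinarith
      have hAB : ∀ s : Set ℝ, (A s).toReal = (A0 s).toReal ∧ (B s).toReal = (B0 s).toReal := by
        intro s
        have e1 := keyR h3 s
        have e2 := keyR (-h3) s
        set wa := mixWeight h3 h3
        set wb := mixWeight h3 (-h3)
        set p := (A s).toReal; set q := (B s).toReal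
        set p0 := (A0 s).toReal; set q0 := (B0 s).toReal
        have h6 : (wa - wb) * ((p - p0) - (q - q0)) = 0 := by linear_combination e1 - e2
        have h7 : (p - p0) - (q - q0) = 0 := by
          rcases mul_eq_zero.mp h6 with h | h
          · exact absurd (by linarith : wa = wb) hwab
          · exact h
        have hp : p - p0 = 0 := by linear_combination e1 + (1 - wa) * h7
        have hq : q - q0 = 0 := by linear_combination e1 - wa * h7
        exact ⟨by linarith, by linarith⟩
      have hA : A = A0 := by
        ext s hs
        exact (ENNReal.toReal_eq_toReal_iff' (measure_ne_top _ _) (measure_ne_top _ _)).mp (hAB s).1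
      have hB : B = B0 := by
        ext s hs
        exact (ENNReal.toReal_eq_toReal_iff' (measure_ne_top _ _) (measure_ne_top _ _)).mp (hAB s).2
      rw [hA, hB]
  refine ⟨hjoint, fun n _ => by rw [hjoint], fun n _ D _ => by rw [hjoint]⟩
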